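/- Let F be a finite chordal polynomial set in K[x_1,...,x_n] such that x_1 < ... < x_n is a perfect elimination ordering of G(F). If a pair (P, Q) of finite polynomial sets is obtained from the pair (F, ∅) by finitely many regular-decomposition steps and the nonzero elements of P are nonconstant with pairwise distinct leading variables, so that they form a triangular set T when ordered by leading variable, then G(T) ⊆ G(F). -/

import Mathlib

open MvPolynomial

variable {K : Type*} [Field K] {n : ℕ}

/-- The set of variables effectively appearing in a polynomial. -/
def psupp (F : MvPolynomial (Fin n) K) : Set (Fin n) := ↑F.vars

/-- The set of variables appearing in a set of polynomials. -/
def ssupp (P : Set (MvPolynomial (Fin n) K)) : Set (Fin n) :=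
  ⋃ F ∈ P, psupp F

/-- Adjacency in the associated graph `G(P)`: `p ≠ q` and some polynomial of `P`
contains both variables. -/
def adjG (P : Set (MvPolynomial (Fin n) K)) (p q : Fin n) : Prop :=
  p ≠ q ∧ ∃ F ∈ P, p ∈ psupp F ∧ q ∈ psupp F

/-- `G(P) ⊆ G(Q)`: every edge of `G(P)` is an edge of `G(Q)`. -/
def subG (P Q : Set (MvPolynomial (Fin n) K)) : Prop :=
  ∀ p q, adjG P p q → adjG Q p q

/-- The natural ordering `x_1 < ... < x_n` of the variables is a perfect elimination
ordering of `G(P)`; in particular `G(P)` is chordal. -/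
def isPEO (P : Set (MvPolynomial (Fin n) K)) : Prop :=
  ∀ p q k : Fin n, p < k → q < k → p ≠ q → adjG P p k → adjG P q k → adjG P p q

/-- `F` is nonconstant with leading variable `x_k`. -/
def hasLv (F : MvPolynomial (Fin n) K) (k : Fin n) : Prop :=
  k ∈ psupp F ∧ ∀ j ∈ psupp F, j ≤ k

/-- `P^(k)`: the polynomials of `P` with leading variable `x_k`. -/
def levelSet (P : Set (MvPolynomial (Fin n) K)) (k : Fin n) :
    Set (MvPolynomial (Fin n) K) :=
  {F | F ∈ P ∧ hasLv F k}

/-- A triangular set: a list of nonconstant polynomials with strictly increasing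
leading variables. -/
def IsTriangularSet (L : List (MvPolynomial (Fin n) K)) : Prop :=
  (∀ F ∈ L, (psupp F).Nonempty) ∧
    L.Chain' fun F G => ∃ a b, hasLv F a ∧ hasLv G b ∧ a < b

/-- A regular-decomposition step: transform a pair `(P, Q)` of polynomial sets, for
some index `k`, by one of the following branches.
(Right branch) choose `T ∈ P^(k)` and polynomials `I, R'` supported in `supp T`,
and pass to `((P \ {T}) ∪ {I, R'}, Q)`.
(Subresultant branch) choose distinct `T₁, T₂ ∈ P^(k)`, polynomials `H_2, ..., H_r`
with `supp (H m) ⊆ supp T₁ ∪ supp T₂`, polynomials `I_2, ..., I_r` with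
`supp (I m) ⊆ supp (H m)`, a polynomial `J` with `supp J ⊆ supp T₂`, and
`2 ≤ i ≤ r`, and pass to
`((P \ {T₁, T₂}) ∪ {H i, I_{i+1}, ..., I_r}, Q ∪ {J, I i})`.
(Mixed branch) choose `T₁ ∈ Q^(k)` and `T₂ ∈ P^(k)`, polynomials `H_2, ..., H_r`
and `S_2, ..., S_r` with supports in `supp T₁ ∪ supp T₂`, polynomials
`I_2, ..., I_r` with `supp (I m) ⊆ supp (H m)`, and `2 ≤ i ≤ r`, and pass to
`((P \ {T₂}) ∪ {S i, I_{i+1}, ..., I_r}, Q ∪ {I i})`, or for `i = r` also possibly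
to `((P \ {T₂}) ∪ {S r}, (Q \ {T₁}) ∪ {I r})`.
(Inequation branch) choose `Q₀ ∈ Q^(k)` and polynomials `I, R` supported in
`supp Q₀`, and pass to `(P ∪ {I}, (Q \ {Q₀}) ∪ {R})` or to `(P, Q ∪ {I})`. -/
def RegStep (PQ PQ' :
    Set (MvPolynomial (Fin n) K) × Set (MvPolynomial (Fin n) K)) : Prop :=
  ∃ k : Fin n,
    (∃ T ∈ levelSet PQ.1 k, ∃ I R' : MvPolynomial (Fin n) K,
        psupp I ⊆ psupp T ∧ psupp R' ⊆ psupp T ∧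
        PQ'.1 = (PQ.1 \ {T}) ∪ {I, R'} ∧ PQ'.2 = PQ.2) ∨
    (∃ T₁ T₂ : MvPolynomial (Fin n) K, T₁ ≠ T₂ ∧
        T₁ ∈ levelSet PQ.1 k ∧ T₂ ∈ levelSet PQ.1 k ∧
      ∃ (r : ℕ) (H I : ℕ → MvPolynomial (Fin n) K) (J : MvPolynomial (Fin n) K)
          (i : ℕ), 2 ≤ i ∧ i ≤ r ∧
        (∀ m, 2 ≤ m → m ≤ r → psupp (H m) ⊆ psupp T₁ ∪ psupp T₂) ∧
        (∀ m, 2 ≤ m → m ≤ r → psupp (I m) ⊆ psupp (H m)) ∧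
        psupp J ⊆ psupp T₂ ∧
        PQ'.1 = (PQ.1 \ {T₁, T₂}) ∪ {H i} ∪ (I '' {m | i < m ∧ m ≤ r}) ∧
        PQ'.2 = PQ.2 ∪ {J, I i}) ∨
    (∃ T₁ T₂ : MvPolynomial (Fin n) K,
        T₁ ∈ levelSet PQ.2 k ∧ T₂ ∈ levelSet PQ.1 k ∧
      ∃ (r : ℕ) (H S I : ℕ → MvPolynomial (Fin n) K) (i : ℕ), 2 ≤ i ∧ i ≤ r ∧
        (∀ m, 2 ≤ m → m ≤ r → psupp (H m) ⊆ psupp T₁ ∪ psupp T₂) ∧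
        (∀ m, 2 ≤ m → m ≤ r → psupp (S m) ⊆ psupp T₁ ∪ psupp T₂) ∧
        (∀ m, 2 ≤ m → m ≤ r → psupp (I m) ⊆ psupp (H m)) ∧
        PQ'.1 = (PQ.1 \ {T₂}) ∪ {S i} ∪ (I '' {m | i < m ∧ m ≤ r}) ∧
        (PQ'.2 = PQ.2 ∪ {I i} ∨ (i = r ∧ PQ'.2 = (PQ.2 \ {T₁}) ∪ {I i}))) ∨
    (∃ Q₀ ∈ levelSet PQ.2 k, ∃ I R : MvPolynomial (Fin n) K,
        psupp I ⊆ psupp Q₀ ∧ psupp R ⊆ psupp Q₀ ∧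
        ((PQ'.1 = PQ.1 ∪ {I} ∧ PQ'.2 = (PQ.2 \ {Q₀}) ∪ {R}) ∨
         (PQ'.1 = PQ.1 ∧ PQ'.2 = PQ.2 ∪ {I})))


/-! ### Auxiliary material for statement15 -/

/-- The support of `F` is a clique in `G(Fs)`. -/
def clq (Fs : Set (MvPolynomial (Fin n) K)) (F : MvPolynomial (Fin n) K) : Prop :=
  ∀ p q, p ∈ psupp F → q ∈ psupp F → p ≠ q → adjG Fs p q

lemma adjG_symm {Fs : Set (MvPolynomial (Fin n) K)} {p q : Fin n}
    (h : adjG Fs p q) : adjG Fs q p := by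
  obtain ⟨hne, F, hF, hp, hq⟩ := h
  exact ⟨hne.symm, F, hF, hq, hp⟩

lemma clq_mono {Fs : Set (MvPolynomial (Fin n) K)} {T I : MvPolynomial (Fin n) K}
    (h : psupp I ⊆ psupp T) (hT : clq Fs T) : clq Fs I :=
  fun p q hp hq hne => hT p q (h hp) (h hq) hne

lemma clq_union {Fs : Set (MvPolynomial (Fin n) K)} (hpeo : isPEO Fs)
    {T₁ T₂ : MvPolynomial (Fin n) K} {k : Fin n}
    (h1 : clq Fs T₁) (h2 : clq Fs T₂) (hl1 : hasLv T₁ k) (hl2 : hasLv T₂ k)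
    {I : MvPolynomial (Fin n) K} (hI : psupp I ⊆ psupp T₁ ∪ psupp T₂) :
    clq Fs I := by
  have cross : ∀ p q, p ∈ psupp T₁ → q ∈ psupp T₂ → p ≠ q → adjG Fs p q := by
    intro p q hp hq hne
    rcases eq_or_ne p k with rfl | hpk
    · exact h2 p q hl2.1 hq hne
    rcases eq_or_ne q k with rfl | hqk
    · exact h1 p q hp hl1.1 hne
    exact hpeo p q k (lt_of_le_of_ne (hl1.2 p hp) hpk)
      (lt_of_le_of_ne (hl2.2 q hq) hqk) hne
      (h1 p k hp hl1.1 hpk) (h2 q k hq hl2.1 hqk)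
  intro p q hp hq hne
  rcases hI hp with hp1 | hp2 <;> rcases hI hq with hq1 | hq2
  · exact h1 p q hp1 hq1 hne
  · exact cross p q hp1 hq2 hne
  · exact adjG_symm (cross q p hq1 hp2 hne.symm)
  · exact h2 p q hp2 hq2 hne

lemma inv_step {Fs : Set (MvPolynomial (Fin n) K)} (hpeo : isPEO Fs)
    {b c : Set (MvPolynomial (Fin n) K) × Set (MvPolynomial (Fin n) K)}
    (hstep : RegStep b c) (ih : ∀ F ∈ b.1 ∪ b.2, clq Fs F) :
    ∀ F ∈ c.1 ∪ c.2, clq Fs F := by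
  obtain ⟨k, hcase⟩ := hstep
  rcases hcase with
      ⟨T, hT, I, R', hI, hR, h1, h2⟩ |
      ⟨T₁, T₂, hne, hT1, hT2, r, H, I, J, i, hi2, hir, hH, hIH, hJ, h1, h2⟩ |
      ⟨T₁, T₂, hT1, hT2, r, H, S, I, i, hi2, hir, hH, hS, hIH, h1, h2⟩ |
      ⟨Q₀, hQ₀, I, R, hI, hR, hcase⟩
  · have hTclq : clq Fs T := ih T (Set.mem_union_left _ hT.1)
    intro F hF
    rw [h1, h2] at hF
    rcases hF with (⟨hF, -⟩ | hF) | hF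
    · exact ih F (Set.mem_union_left _ hF)
    · rcases hF with rfl | rfl
      · exact clq_mono hI hTclq
      · exact clq_mono hR hTclq
    · exact ih F (Set.mem_union_right _ hF)
  · have hc1 : clq Fs T₁ := ih T₁ (Set.mem_union_left _ hT1.1)
    have hc2 : clq Fs T₂ := ih T₂ (Set.mem_union_left _ hT2.1)
    have hU : ∀ G : MvPolynomial (Fin n) K,
        psupp G ⊆ psupp T₁ ∪ psupp T₂ → clq Fs G :=
      fun G hG => clq_union hpeo hc1 hc2 hT1.2 hT2.2 hG
    intro F hF
    rw [h1, h2] at hF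
    rcases hF with ((⟨hF, -⟩ | rfl) | ⟨m, ⟨him, hmr⟩, rfl⟩) | hF | hF
    · exact ih F (Set.mem_union_left _ hF)
    · exact hU _ (hH i hi2 hir)
    · exact clq_mono (hIH m (hi2.trans him.le) hmr) (hU _ (hH m (hi2.trans him.le) hmr))
    · exact ih F (Set.mem_union_right _ hF)
    · rcases hF with rfl | rfl
      · exact clq_mono hJ hc2
      · exact clq_mono (hIH i hi2 hir) (hU _ (hH i hi2 hir))
  · have hc1 : clq Fs T₁ := ih T₁ (Set.mem_union_right _ hT1.1)
    have hc2 : clq Fs T₂ := ih T₂ (Set.mem_union_left _ hT2.1)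
    have hU : ∀ G : MvPolynomial (Fin n) K,
        psupp G ⊆ psupp T₁ ∪ psupp T₂ → clq Fs G :=
      fun G hG => clq_union hpeo hc1 hc2 hT1.2 hT2.2 hG
    intro F hF
    rcases hF with hF | hF
    · rw [h1] at hF
      rcases hF with (⟨hF, -⟩ | rfl) | ⟨m, ⟨him, hmr⟩, rfl⟩
      · exact ih F (Set.mem_union_left _ hF)
      · exact hU _ (hS i hi2 hir)
      · exact clq_mono (hIH m (hi2.trans him.le) hmr)
          (hU _ (hH m (hi2.trans him.le) hmr))
    · rcases h2 with h2 | ⟨-, h2⟩ <;> rw [h2] at hF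
      · rcases hF with hF | rfl
        · exact ih F (Set.mem_union_right _ hF)
        · exact clq_mono (hIH i hi2 hir) (hU _ (hH i hi2 hir))
      · rcases hF with ⟨hF, -⟩ | rfl
        · exact ih F (Set.mem_union_right _ hF)
        · exact clq_mono (hIH i hi2 hir) (hU _ (hH i hi2 hir))
  · have hc0 : clq Fs Q₀ := ih Q₀ (Set.mem_union_right _ hQ₀.1)
    intro F hF
    rcases hcase with ⟨h1, h2⟩ | ⟨h1, h2⟩ <;> rw [h1, h2] at hF
    · rcases hF with (hF | rfl) | (⟨hF, -⟩ | rfl)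
      · exact ih F (Set.mem_union_left _ hF)
      · exact clq_mono hI hc0
      · exact ih F (Set.mem_union_right _ hF)
      · exact clq_mono hR hc0
    · rcases hF with hF | (hF | rfl)
      · exact ih F (Set.mem_union_left _ hF)
      · exact ih F (Set.mem_union_right _ hF)
      · exact clq_mono hI hc0

/-- A numeric encoding of the leading variable (shifted by one). -/
noncomputable def lvf (G : MvPolynomial (Fin n) K) : ℕ :=
  G.vars.sup fun x => (x : ℕ) + 1

lemma lvf_eq {G : MvPolynomial (Fin n) K} {a : Fin n} (h : hasLv G a) :
    lvf G = (a : ℕ) + 1 := by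
  apply le_antisymm
  · exact Finset.sup_le fun x hx =>
      Nat.succ_le_succ (Fin.le_def.1 (h.2 x (by simpa [psupp] using hx)))
  · exact Finset.le_sup (f := fun x : Fin n => (x : ℕ) + 1)
      (by simpa [psupp] using h.1)

lemma exists_hasLv {G : MvPolynomial (Fin n) K} (h : (psupp G).Nonempty) :
    ∃ a : Fin n, hasLv G a := by
  have hne : G.vars.Nonempty := by
    obtain ⟨x, hx⟩ := h
    exact ⟨x, by simpa [psupp] using hx⟩
  refine ⟨G.vars.max' hne, ?_, ?_⟩
  · simpa [psupp] using G.vars.max'_mem hne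
  · intro j hj
    exact Finset.le_max' _ j (by simpa [psupp] using hj)

lemma exists_sorted_list {α : Type*} [DecidableEq α] (f : α → ℕ) (s : Finset α)
    (hinj : Set.InjOn f s) :
    ∃ L : List α, (∀ G, G ∈ L ↔ G ∈ s) ∧ L.Chain' fun F G => f F < f G := by
  induction s using Finset.strongInduction with
  | _ s ih =>
    rcases s.eq_empty_or_nonempty with rfl | hne
    · exact ⟨[], by simp, List.isChain_nil⟩
    obtain ⟨a, ha, hmin⟩ := s.exists_min_image f hne
    obtain ⟨L', hL'mem, hL'chain⟩ := ih (s.erase a) (Finset.erase_ssubset ha)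
      (hinj.mono (by simpa using Finset.erase_subset a s))
    refine ⟨a :: L', ?_, ?_⟩
    · intro G
      simp only [List.mem_cons, hL'mem, Finset.mem_erase]
      constructor
      · rintro (rfl | ⟨-, hG⟩)
        · exact ha
        · exact hG
      · intro hG
        rcases eq_or_ne G a with rfl | hGa
        · exact Or.inl rfl
        · exact Or.inr ⟨hGa, hG⟩
    · rw [List.Chain', List.isChain_cons]
      refine ⟨?_, hL'chain⟩
      intro b hb
      have hbL : b ∈ L' := List.mem_of_mem_head? hb
      have hbs : b ∈ s.erase a := (hL'mem b).1 hbL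
      have hba : b ≠ a := (Finset.mem_erase.1 hbs).1
      have hle : f a ≤ f b := hmin b (Finset.mem_of_mem_erase hbs)
      exact lt_of_le_of_ne hle fun hfe =>
        hba (hinj (Finset.mem_of_mem_erase hbs) ha hfe.symm)

lemma chain'_imp_mem {α : Type*} {r s : α → α → Prop} :
    ∀ {L : List α}, (∀ a ∈ L, ∀ b ∈ L, r a b → s a b) → L.Chain' r → L.Chain' s := by
  intro L
  induction L with
  | nil => intro _ _; exact List.isChain_nil
  | cons a L ihL =>
    intro hmem hc
    rw [List.Chain', List.isChain_cons] at hc ⊢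
    refine ⟨fun b hb => hmem a (by simp) b
      (List.mem_cons_of_mem _ (List.mem_of_mem_head? hb)) (hc.1 b hb),
      ihL (fun x hx y hy => hmem x (List.mem_cons_of_mem _ hx)
        y (List.mem_cons_of_mem _ hy)) hc.2⟩

/-- let `Fs` be a finite chordal polynomial set whose natural variable
ordering is a perfect elimination ordering, and let `(P, Q)` be obtained from
`(Fs, ∅)` by finitely many regular-decomposition steps.  If the nonzero elements of
`P` are nonconstant with pairwise distinct leading variables, then they form,
ordered by leading variable, a triangular set `L` with `G(L) ⊆ G(Fs)`. -/
theorem statement15 {K : Type*} [Field K] {n : ℕ}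
    (Fs : Set (MvPolynomial (Fin n) K)) (hFfin : Fs.Finite) (hpeo : isPEO Fs)
    (P Q : Set (MvPolynomial (Fin n) K))
    (h : Relation.ReflTransGen RegStep (Fs, ∅) (P, Q))
    (hnc : ∀ G ∈ P, G ≠ 0 → (psupp G).Nonempty)
    (hdist : ∀ G ∈ P, ∀ H ∈ P, G ≠ 0 → H ≠ 0 → G ≠ H →
      ∀ a b : Fin n, hasLv G a → hasLv H b → a ≠ b) :
    ∃ L : List (MvPolynomial (Fin n) K),
      (∀ G, G ∈ L ↔ G ∈ P ∧ G ≠ 0) ∧ IsTriangularSet L ∧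
      subG {G | G ∈ L} Fs := by
  classical
  -- The clique invariant along the decomposition.
  have hInv : ∀ F ∈ P ∪ Q, clq Fs F := by
    have main : ∀ PQ : Set (MvPolynomial (Fin n) K) × Set (MvPolynomial (Fin n) K),
        Relation.ReflTransGen RegStep (Fs, (∅ : Set (MvPolynomial (Fin n) K))) PQ →
        ∀ F ∈ PQ.1 ∪ PQ.2, clq Fs F := by
      intro PQ hPQ
      induction hPQ with
      | refl =>
          intro F hF
          have hF' : F ∈ Fs := by simpa using hF
          exact fun p q hp hq hne => ⟨hne, F, hF', hp, hq⟩
      | tail _ hstep ihPQ => exact inv_step hpeo hstep ihPQ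
    exact main (P, Q) h
  -- The set of nonzero elements of `P` is finite.
  set Sset : Set (MvPolynomial (Fin n) K) := {G | G ∈ P ∧ G ≠ 0} with hSset
  have hlv : ∀ G ∈ Sset, ∃ a : Fin n, hasLv G a := fun G hG =>
    exists_hasLv (hnc G hG.1 hG.2)
  have hinj : Set.InjOn lvf Sset := by
    intro G hG H hH hfe
    by_contra hGH
    obtain ⟨a, ha⟩ := hlv G hG
    obtain ⟨b, hb⟩ := hlv H hH
    have hab : a ≠ b := hdist G hG.1 H hH.1 hG.2 hH.2 hGH a b ha hb
    rw [lvf_eq ha, lvf_eq hb] at hfe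
    exact hab (Fin.val_injective (Nat.succ_injective hfe))
  have hSfin : Sset.Finite := by
    refine Set.Finite.of_finite_image ((Set.finite_Iic n).subset ?_) hinj
    rintro x ⟨G, hG, rfl⟩
    obtain ⟨a, ha⟩ := hlv G hG
    rw [lvf_eq ha]
    exact Nat.succ_le_of_lt a.isLt
  have hinj' : Set.InjOn lvf (hSfin.toFinset : Set (MvPolynomial (Fin n) K)) := by
    simpa using hinj
  obtain ⟨L, hLmem, hLchain⟩ := exists_sorted_list lvf hSfin.toFinset hinj'
  have hLmem' : ∀ G, G ∈ L ↔ G ∈ P ∧ G ≠ 0 := by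
    intro G
    rw [hLmem G, Set.Finite.mem_toFinset]
    rfl
  refine ⟨L, hLmem', ⟨?_, ?_⟩, ?_⟩
  · intro F hF
    exact hnc F ((hLmem' F).1 hF).1 ((hLmem' F).1 hF).2
  · refine chain'_imp_mem ?_ hLchain
    intro F hF G hG hlt
    obtain ⟨a, ha⟩ := hlv F ((hLmem' F).1 hF)
    obtain ⟨b, hb⟩ := hlv G ((hLmem' G).1 hG)
    refine ⟨a, b, ha, hb, ?_⟩
    rw [lvf_eq ha, lvf_eq hb] at hlt
    exact Fin.lt_def.2 (Nat.lt_of_succ_lt_succ hlt)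
  · rintro p q ⟨hne, F, hFL, hp, hq⟩
    exact hInv F (Set.mem_union_left _ ((hLmem' F).1 hFL).1) p q hp hq hne
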